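/- For any costs 0 < t_1 ≤ t_2 ≤ ⋯ ≤ t_n, the social cost of mechanism K is at most the social cost of mechanism P: ∑_{k=1}^n p_k^K t_k ≤ ∑_{k=1}^n p_k^P t_k. -/

import Mathlib

open MeasureTheory Finset

/-- Allocation probability of mechanism K for machine `k`, on sorted costs with `t 0` minimal:
`p_k^K = (1/t_k) · ∫_0^{t_1} ∏_{i ≠ k} (1 − x/t_i) dx`. -/
noncomputable def pK {n : ℕ} [NeZero n] (t : Fin n → ℝ) (k : Fin n) : ℝ :=
  (1 / t k) * ∫ x in (0:ℝ)..(t 0), ∏ i ∈ univ.erase k, (1 - x / t i)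

/-- Allocation probability of mechanism P for machine `k`:
`p_k^P = (1/t_k) / (∑_i 1/t_i)`. -/
noncomputable def pP {n : ℕ} (t : Fin n → ℝ) (k : Fin n) : ℝ :=
  (1 / t k) / (∑ i, 1 / t i)

/-- For sorted costs `0 < t 0 ≤ ⋯ ≤ t (n-1)` (with `n ≥ 2`), the social cost of
mechanism K is at most the social cost of mechanism P: `∑_k p_k^K t_k ≤ ∑_k p_k^P t_k`. -/
theorem mechanismK_socialCost_le_mechanismP
    (n : ℕ) [NeZero n] (hn : 2 ≤ n) (t : Fin n → ℝ)
    (hpos : 0 < t 0) (hmono : Monotone t) :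
    ∑ k, pK t k * t k ≤ ∑ k, pP t k * t k := by
  have tpos : ∀ k, 0 < t k := fun k => hpos.trans_le (hmono (Fin.zero_le k))
  set I : Fin n → ℝ :=
    fun k => ∫ x in (0:ℝ)..(t 0), ∏ i ∈ univ.erase k, (1 - x / t i) with hI
  set S : ℝ := ∑ i, 1 / t i with hS
  have hSpos : 0 < S := Finset.sum_pos (fun i _ => one_div_pos.2 (tpos i)) ⟨0, mem_univ 0⟩
  -- continuity/integrability of the integrands
  have hcont : ∀ k : Fin n, Continuous fun x : ℝ =>
      ∏ i ∈ univ.erase k, (1 - x / t i) := by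
    intro k
    exact continuous_finset_prod _ fun i _ => by fun_prop
  -- LHS equals ∑ I
  have hL : ∑ k, pK t k * t k = ∑ k, I k := by
    refine Finset.sum_congr rfl fun k _ => ?_
    rw [pK]
    field_simp [(tpos k).ne']
    rfl
  -- RHS equals n / S
  have hR : ∑ k, pP t k * t k = n / S := by
    have : ∀ k : Fin n, pP t k * t k = 1 / S := by
      intro k
      rw [pP]
      field_simp [(tpos k).ne', hSpos.ne']
      exact div_self hSpos.ne'
    rw [Finset.sum_congr rfl fun k _ => this k]
    simp [Finset.card_univ]
    ring
  -- key identity : ∑ (1/t k) * I k = 1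
  have hkey : ∑ k, (1 / t k) * I k = 1 := by
    have h1 : ∑ k, (1 / t k) * I k
        = ∫ x in (0:ℝ)..(t 0), ∑ k, (1 / t k) * ∏ i ∈ univ.erase k, (1 - x / t i) := by
      rw [intervalIntegral.integral_finset_sum]
      · exact Finset.sum_congr rfl fun k _ => by
          rw [hI, ← intervalIntegral.integral_const_mul]
      · intro k _
        exact (Continuous.intervalIntegrable (by fun_prop) _ _)
    rw [h1]
    have hderiv : ∀ x ∈ Set.uIcc (0:ℝ) (t 0),
        HasDerivAt (fun x => -∏ i, (1 - x / t i))
          (∑ k, (1 / t k) * ∏ i ∈ univ.erase k, (1 - x / t i)) x := by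
      intro x _
      have := (HasDerivAt.fun_finsetProd (u := univ)
        (fun i _ => ((hasDerivAt_id x).div_const (t i)).const_sub 1)).fun_neg
      refine this.congr_deriv ?_
      rw [← Finset.sum_neg_distrib]
      exact Finset.sum_congr rfl fun k _ => by simp [smul_eq_mul]; ring
    rw [intervalIntegral.integral_eq_sub_of_hasDerivAt hderiv
      (Continuous.intervalIntegrable (by continuity) _ _)]
    have h0 : ∏ i, (1 - t 0 / t i) = 0 :=
      Finset.prod_eq_zero (mem_univ 0) (by rw [div_self (tpos 0).ne']; ring)
    simp [h0]
  -- antitonicity of I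
  have hIanti : Antitone I := by
    intro k l hkl
    rcases eq_or_lt_of_le hkl with h | h
    · rw [h]
    have hne : k ≠ l := ne_of_lt h
    refine intervalIntegral.integral_mono_on hpos.le
      (Continuous.intervalIntegrable (hcont l) _ _)
      (Continuous.intervalIntegrable (hcont k) _ _) ?_
    intro x hx
    obtain ⟨hx0, hx1⟩ := hx
    have hfac : ∀ j : Fin n, 0 ≤ 1 - x / t j := by
      intro j
      have : x / t j ≤ 1 := by
        rw [div_le_one (tpos j)]
        exact hx1.trans (hmono (Fin.zero_le j))
      linarith
    have hkl' : k ∈ univ.erase l := mem_erase.2 ⟨hne, mem_univ k⟩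
    have hlk' : l ∈ univ.erase k := mem_erase.2 ⟨hne.symm, mem_univ l⟩
    rw [← Finset.mul_prod_erase _ _ hkl', ← Finset.mul_prod_erase _ _ hlk',
      Finset.erase_right_comm]
    have hprodnn : 0 ≤ ∏ j ∈ (univ.erase k).erase l, (1 - x / t j) :=
      Finset.prod_nonneg fun j _ => hfac j
    have : 1 - x / t k ≤ 1 - x / t l := by
      have := div_le_div_of_nonneg_left hx0 (tpos k) (hmono hkl)
      linarith
    exact mul_le_mul_of_nonneg_right this hprodnn
  -- antitonicity of 1/t
  have hwanti : Antitone fun k : Fin n => 1 / t k := by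
    intro k l hkl
    exact one_div_le_one_div_of_le (tpos k) (hmono hkl)
  -- Chebyshev
  have hcheb := (hwanti.monovary hIanti).sum_mul_sum_le_card_mul_sum
  rw [hkey] at hcheb
  simp [Finset.card_univ] at hcheb
  rw [hL, hR, le_div_iff₀ hSpos]
  calc (∑ k, I k) * S = S * ∑ k, I k := by ring
    _ ≤ n := by rw [hS]; simpa using hcheb
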